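/- For any two-player constant-sum game (A, B) with ⟨x₁, A x₂⟩ + ⟨x₁, B x₂⟩ = V for all strategies, and for any μ > -1, the game is (1+μ, μ)-smooth: there exists (x₁*, x₂*) maximizing welfare such that u₁(x₁*, x₂) + u₂(x₂*, x₁) ≥ (1+μ)·OPT - μ·SW(x₁,x₂) for all (x₁, x₂). -/

import Mathlib

open scoped Matrix
open Set

variable {d : ℕ}

lemma mmx_cont_right (A : Matrix (Fin d) (Fin d) ℝ) (x : Fin d → ℝ) :
    Continuous fun z : Fin d → ℝ => x ⬝ᵥ A.mulVec z := by
  simp only [dotProduct, Matrix.mulVec]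
  exact continuous_finset_sum _ fun i _ => continuous_const.mul
    (continuous_finset_sum _ fun j _ => continuous_const.mul (continuous_apply j))

lemma mmx_cont_left (A : Matrix (Fin d) (Fin d) ℝ) (z : Fin d → ℝ) :
    Continuous fun x : Fin d → ℝ => x ⬝ᵥ A.mulVec z := by
  simp only [dotProduct]
  exact continuous_finset_sum _ fun i _ => (continuous_apply i).mul continuous_const

lemma mmx_affine_left (A : Matrix (Fin d) (Fin d) ℝ) (a b z : Fin d → ℝ) (s t : ℝ) :
    (s • a + t • b) ⬝ᵥ A.mulVec z = s * (a ⬝ᵥ A.mulVec z) + t * (b ⬝ᵥ A.mulVec z) := by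
  simp [add_dotProduct, smul_dotProduct, smul_eq_mul]

lemma mmx_affine_right (A : Matrix (Fin d) (Fin d) ℝ) (x a b : Fin d → ℝ) (s t : ℝ) :
    x ⬝ᵥ A.mulVec (s • a + t • b) = s * (x ⬝ᵥ A.mulVec a) + t * (x ⬝ᵥ A.mulVec b) := by
  simp [Matrix.mulVec_add, Matrix.mulVec_smul, dotProduct_add, dotProduct_smul,
    smul_eq_mul]

/-- Komiya's two-point lemma. -/
lemma mmx_two_point (A : Matrix (Fin d) (Fin d) ℝ) (Z : Set (Fin d → ℝ))
    (hZc : IsCompact Z) (hZconv : Convex ℝ Z) (a b : Fin d → ℝ) (c c' : ℝ) (hcc' : c < c')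
    (hmax : ∀ z ∈ Z, c' < max (a ⬝ᵥ A.mulVec z) (b ⬝ᵥ A.mulVec z)) :
    ∃ t ∈ Set.Icc (0:ℝ) 1, ∀ z ∈ Z, c < ((1-t) • a + t • b) ⬝ᵥ A.mulVec z := by
  by_contra hcon
  push_neg at hcon
  set x : ℝ → (Fin d → ℝ) := fun t => (1-t) • a + t • b with hx
  -- level sets
  set C : ℝ → Set (Fin d → ℝ) := fun t => {z ∈ Z | x t ⬝ᵥ A.mulVec z ≤ c} with hC
  set C' : ℝ → Set (Fin d → ℝ) := fun t => {z ∈ Z | x t ⬝ᵥ A.mulVec z ≤ c'} with hC'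
  set A' : Set (Fin d → ℝ) := {z ∈ Z | a ⬝ᵥ A.mulVec z ≤ c'} with hA'
  set B' : Set (Fin d → ℝ) := {z ∈ Z | b ⬝ᵥ A.mulVec z ≤ c'} with hB'
  have hxa : x 0 = a := by simp [hx]
  have hxb : x 1 = b := by simp [hx]
  have haff : ∀ t z, x t ⬝ᵥ A.mulVec z
      = (1-t) * (a ⬝ᵥ A.mulVec z) + t * (b ⬝ᵥ A.mulVec z) := fun t z =>
    mmx_affine_left A a b z (1-t) t
  have hdisj : A' ∩ B' = ∅ := by
    ext z; simp only [hA', hB', mem_inter_iff, mem_setOf_eq, mem_empty_iff_false, iff_false]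
    rintro ⟨⟨hz, h1⟩, ⟨_, h2⟩⟩
    have := hmax z hz
    rcases max_cases (a ⬝ᵥ A.mulVec z) (b ⬝ᵥ A.mulVec z) with ⟨he, _⟩ | ⟨he, _⟩ <;> linarith [he ▸ this]
  have hA'closed : IsClosed A' :=
    hZc.isClosed.inter (isClosed_Iic.preimage (mmx_cont_right A a))
  have hB'closed : IsClosed B' :=
    hZc.isClosed.inter (isClosed_Iic.preimage (mmx_cont_right A b))
  have hCne : ∀ t ∈ Icc (0:ℝ) 1, (C t).Nonempty := by
    intro t ht
    obtain ⟨z, hz, hle⟩ := hcon t ht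
    exact ⟨z, hz, hle⟩
  have hCsubC' : ∀ t, C t ⊆ C' t := fun t z hz => ⟨hz.1, hz.2.trans hcc'.le⟩
  have hcover : ∀ t ∈ Icc (0:ℝ) 1, C' t ⊆ A' ∪ B' := by
    intro t ht z hz
    by_contra hnz
    simp only [hA', hB', mem_union, mem_setOf_eq, not_or, not_and, not_le] at hnz
    have hfa := hnz.1 hz.1
    have hfb := hnz.2 hz.1
    have hzc' : x t ⬝ᵥ A.mulVec z ≤ c' := hz.2
    rw [haff t z] at hzc'
    rcases eq_or_lt_of_le ht.1 with h0 | h0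
    · rw [← h0] at hzc'; simp at hzc'; linarith
    · nlinarith [mul_pos h0 (sub_pos.2 hfb), mul_nonneg (sub_nonneg.2 ht.2) (sub_pos.2 hfa).le]
  have hC'conv : ∀ t, Convex ℝ (C' t) := by
    intro t
    intro z1 hz1 z2 hz2 s u hs hu hsu
    refine ⟨hZconv hz1.1 hz2.1 hs hu hsu, ?_⟩
    rw [mmx_affine_right]
    have hc'eq : s * c' + u * c' = c' := by rw [← add_mul, hsu, one_mul]
    have h1 := mul_le_mul_of_nonneg_left hz1.2 hs
    have h2 := mul_le_mul_of_nonneg_left hz2.2 hu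
    linarith
  -- dichotomy
  have hdich : ∀ t ∈ Icc (0:ℝ) 1, C' t ⊆ A' ∨ C' t ⊆ B' := by
    intro t ht
    have hpc : IsPreconnected (C' t) := (hC'conv t).isPreconnected
    by_contra hor
    push_neg at hor
    obtain ⟨z1, hz1, hz1A⟩ := not_subset.1 hor.1
    obtain ⟨z2, hz2, hz2B⟩ := not_subset.1 hor.2
    have h1 : z1 ∈ B' := (hcover t ht hz1).resolve_left hz1A
    have h2 : z2 ∈ A' := (hcover t ht hz2).resolve_right hz2B
    have := isPreconnected_closed_iff.1 hpc A' B' hA'closed hB'closed (hcover t ht)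
      ⟨z2, hz2, h2⟩ ⟨z1, hz1, h1⟩
    rw [hdisj] at this
    simpa using this
  -- I and J
  set I : Set ℝ := {t ∈ Icc (0:ℝ) 1 | C' t ⊆ A'} with hI
  set J : Set ℝ := {t ∈ Icc (0:ℝ) 1 | C' t ⊆ B'} with hJ
  have hIJdisj : I ∩ J = ∅ := by
    ext t; simp only [hI, hJ, mem_inter_iff, mem_setOf_eq, mem_empty_iff_false, iff_false]
    rintro ⟨⟨ht, hA⟩, ⟨_, hB⟩⟩
    obtain ⟨z, hz⟩ := hCne t ht
    have := hdisj ▸ mem_inter (hA (hCsubC' t hz)) (hB (hCsubC' t hz))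
    simpa using this
  have hcov : Icc (0:ℝ) 1 ⊆ I ∪ J := by
    intro t ht
    rcases hdich t ht with h | h
    · exact Or.inl ⟨ht, h⟩
    · exact Or.inr ⟨ht, h⟩
  -- closedness via closure argument
  have hkey : ∀ t ∈ Icc (0:ℝ) 1, ∀ (S : Set (Fin d → ℝ)), t ∈ closure {s ∈ Icc (0:ℝ) 1 | C' s ⊆ S} →
      (C t ∩ S).Nonempty := by
    intro t ht S htc
    obtain ⟨z, hzZ, hzc⟩ := hCne t ht
    have hcontt : Continuous fun s : ℝ => x s ⬝ᵥ A.mulVec z := by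
      simp only [haff]
      exact ((continuous_const.sub continuous_id).mul continuous_const).add
        (continuous_id.mul continuous_const)
    have hUopen : IsOpen {s : ℝ | x s ⬝ᵥ A.mulVec z < c'} := isOpen_lt hcontt continuous_const
    have htU : t ∈ {s : ℝ | x s ⬝ᵥ A.mulVec z < c'} := lt_of_le_of_lt hzc hcc'
    obtain ⟨s, hsU, hsI⟩ := mem_closure_iff.1 htc _ hUopen htU
    exact ⟨z, ⟨hzZ, hzc⟩, hsI.2 ⟨hzZ, le_of_lt hsU⟩⟩
  have hclosed : ∀ (S T : Set (Fin d → ℝ)), IsClosed S → S ∩ T = ∅ →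
      (∀ t ∈ Icc (0:ℝ) 1, C' t ⊆ S ∨ C' t ⊆ T) →
      IsClosed {t ∈ Icc (0:ℝ) 1 | C' t ⊆ S} := by
    intro S T hScl hST hd
    rw [← closure_eq_iff_isClosed]
    refine Subset.antisymm ?_ subset_closure
    intro t htc
    have htIcc : t ∈ Icc (0:ℝ) 1 := by
      have : closure {s ∈ Icc (0:ℝ) 1 | C' s ⊆ S} ⊆ closure (Icc (0:ℝ) 1) :=
        closure_mono fun s hs => hs.1
      simpa [isClosed_Icc.closure_eq] using this htc
    obtain ⟨z, hzC, hzS⟩ := hkey t htIcc S htc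
    refine ⟨htIcc, ?_⟩
    rcases hd t htIcc with h | h
    · exact h
    · exfalso
      have : z ∈ S ∩ T := ⟨hzS, h (hCsubC' t hzC)⟩
      rw [hST] at this; exact this
  have hIclosed : IsClosed I := hclosed A' B' hA'closed hdisj hdich
  have hJclosed : IsClosed J := by
    refine hclosed B' A' hB'closed ?_ fun t ht => (hdich t ht).symm
    rw [inter_comm]; exact hdisj
  have h0I : (0:ℝ) ∈ I := by
    refine ⟨⟨le_refl 0, zero_le_one⟩, fun z hz => ⟨hz.1, ?_⟩⟩
    rw [← hxa]; exact hz.2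
  have h1J : (1:ℝ) ∈ J := by
    refine ⟨⟨zero_le_one, le_refl 1⟩, fun z hz => ⟨hz.1, ?_⟩⟩
    rw [← hxb]; exact hz.2
  have := isPreconnected_closed_iff.1 isPreconnected_Icc I J hIclosed hJclosed hcov
    ⟨0, h0I.1, h0I⟩ ⟨1, h1J.1, h1J⟩
  rw [hIJdisj] at this
  simpa using this


/-- sublevel sets of a linear functional on a convex set are convex -/
lemma mmx_sublevel_convex (A : Matrix (Fin d) (Fin d) ℝ) (Z : Set (Fin d → ℝ))
    (hZconv : Convex ℝ Z) (p : Fin d → ℝ) (r : ℝ) :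
    Convex ℝ {z ∈ Z | p ⬝ᵥ A.mulVec z ≤ r} := by
  intro z1 hz1 z2 hz2 s u hs hu hsu
  refine ⟨hZconv hz1.1 hz2.1 hs hu hsu, ?_⟩
  rw [mmx_affine_right]
  have hreq : s * r + u * r = r := by rw [← add_mul, hsu, one_mul]
  have h1 := mul_le_mul_of_nonneg_left hz1.2 hs
  have h2 := mul_le_mul_of_nonneg_left hz2.2 hu
  linarith

lemma mmx_sublevel_compact (A : Matrix (Fin d) (Fin d) ℝ) (Z : Set (Fin d → ℝ))
    (hZc : IsCompact Z) (p : Fin d → ℝ) (r : ℝ) :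
    IsCompact {z ∈ Z | p ⬝ᵥ A.mulVec z ≤ r} :=
  hZc.inter_right (isClosed_Iic.preimage (mmx_cont_right A p))

/-- Komiya's finite lemma, by induction on a list of strategies. -/
lemma mmx_finite (A : Matrix (Fin d) (Fin d) ℝ) (X1 : Set (Fin d → ℝ))
    (hX1conv : Convex ℝ X1) (L : List (Fin d → ℝ)) :
    ∀ (Z : Set (Fin d → ℝ)), IsCompact Z → Convex ℝ Z → Z.Nonempty →
    (∀ p ∈ L, p ∈ X1) → ∀ (c c' : ℝ), c < c' →
    (∀ z ∈ Z, ∃ p ∈ L, c' < p ⬝ᵥ A.mulVec z) →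
    ∃ x ∈ X1, ∀ z ∈ Z, c < x ⬝ᵥ A.mulVec z := by
  induction L with
  | nil =>
    intro Z _ _ hZne _ c c' _ hspec
    obtain ⟨z, hz⟩ := hZne
    obtain ⟨p, hp, -⟩ := hspec z hz
    exact absurd hp List.not_mem_nil
  | cons p L ih =>
    intro Z hZc hZconv hZne hL c c' hcc' hspec
    have hpX1 : p ∈ X1 := hL p List.mem_cons_self
    set mid := (c + c') / 2 with hmid
    have hcmid : c < mid := by simp [hmid]; linarith
    have hmidc' : mid < c' := by simp [hmid]; linarith
    set Z' := {z ∈ Z | p ⬝ᵥ A.mulVec z ≤ mid} with hZ'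
    by_cases hZ'ne : Z'.Nonempty
    · have hZ'c := mmx_sublevel_compact A Z hZc p mid
      have hZ'conv := mmx_sublevel_convex A Z hZconv p mid
      have hspec' : ∀ z ∈ Z', ∃ q ∈ L, c' < q ⬝ᵥ A.mulVec z := by
        intro z hz
        obtain ⟨q, hq, hqv⟩ := hspec z hz.1
        rcases List.mem_cons.1 hq with rfl | hq'
        · exact absurd hqv (not_lt.2 (hz.2.trans hmidc'.le))
        · exact ⟨q, hq', hqv⟩
      obtain ⟨x', hx'X1, hx'⟩ := ih Z' hZ'c hZ'conv hZ'ne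
        (fun q hq => hL q (List.mem_cons_of_mem p hq)) mid c' hmidc' hspec'
      have hmax : ∀ z ∈ Z, mid < max (x' ⬝ᵥ A.mulVec z) (p ⬝ᵥ A.mulVec z) := by
        intro z hz
        by_cases hzZ' : z ∈ Z'
        · exact lt_max_of_lt_left (hx' z hzZ')
        · have : ¬ (p ⬝ᵥ A.mulVec z ≤ mid) := fun h => hzZ' ⟨hz, h⟩
          exact lt_max_of_lt_right (not_le.1 this)
      obtain ⟨t, ht, hgood⟩ := mmx_two_point A Z hZc hZconv x' p c mid hcmid hmax
      refine ⟨(1-t) • x' + t • p, ?_, hgood⟩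
      exact hX1conv hx'X1 hpX1 (by linarith [ht.2]) ht.1 (by ring)
    · rw [Set.not_nonempty_iff_eq_empty] at hZ'ne
      refine ⟨p, hpX1, fun z hz => ?_⟩
      have : z ∉ Z' := by rw [hZ'ne]; exact notMem_empty z
      have : ¬ (p ⬝ᵥ A.mulVec z ≤ mid) := fun h => this ⟨hz, h⟩
      linarith [not_le.1 this]


/-- von Neumann minimax: existence of a saddle point. -/
theorem mmx_saddle (A : Matrix (Fin d) (Fin d) ℝ) (X1 X2 : Set (Fin d → ℝ))
    (hX1 : X1.Nonempty) (hX2 : X2.Nonempty)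
    (hX1c : IsCompact X1) (hX2c : IsCompact X2)
    (hX1conv : Convex ℝ X1) (hX2conv : Convex ℝ X2) :
    ∃ x1s ∈ X1, ∃ x2s ∈ X2, ∀ x ∈ X1, ∀ z ∈ X2,
      x ⬝ᵥ A.mulVec x2s ≤ x1s ⬝ᵥ A.mulVec z := by
  classical
  set Γ : Set ℝ := {γ | ∃ z ∈ X2, ∀ x ∈ X1, x ⬝ᵥ A.mulVec z ≤ γ} with hΓ
  obtain ⟨z0, hz0⟩ := hX2
  obtain ⟨x0, hx0⟩ := hX1
  -- Γ is nonempty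
  obtain ⟨xm, hxm, hxmax⟩ := hX1c.exists_isMaxOn ⟨x0, hx0⟩ (mmx_cont_left A z0).continuousOn
  have hΓne : Γ.Nonempty := ⟨xm ⬝ᵥ A.mulVec z0, z0, hz0, fun x hx => hxmax hx⟩
  -- Γ is bounded below
  obtain ⟨zm, hzm, hzmin⟩ := hX2c.exists_isMinOn ⟨z0, hz0⟩ (mmx_cont_right A x0).continuousOn
  have hΓbdd : BddBelow Γ := by
    refine ⟨x0 ⬝ᵥ A.mulVec zm, fun γ hγ => ?_⟩
    obtain ⟨z, hz, hγ'⟩ := hγ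
    exact le_trans (hzmin hz) (hγ' x0 hx0)
  set w : ℝ := sInf Γ with hw
  -- existence of x2s with ∀ x ∈ X1, f x x2s ≤ w
  have hx2s : ∃ x2s ∈ X2, ∀ x ∈ X1, x ⬝ᵥ A.mulVec x2s ≤ w := by
    set K : {γ : ℝ // w < γ} → Set (Fin d → ℝ) :=
      fun γ => {z ∈ X2 | ∀ x ∈ X1, x ⬝ᵥ A.mulVec z ≤ γ.1} with hK
    have hKcl : ∀ γ, IsClosed (K γ) := by
      intro γ
      have : K γ = X2 ∩ ⋂ x ∈ X1, {z | x ⬝ᵥ A.mulVec z ≤ γ.1} := by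
        ext z; simp [hK, mem_iInter₂]
      rw [this]
      exact hX2c.isClosed.inter (isClosed_biInter fun x _ =>
        isClosed_Iic.preimage (mmx_cont_right A x))
    have hKc : ∀ γ, IsCompact (K γ) := fun γ =>
      hX2c.of_isClosed_subset (hKcl γ) (fun z hz => hz.1)
    have hKne : ∀ γ, (K γ).Nonempty := by
      rintro ⟨γ, hγ⟩
      obtain ⟨γ', hγ'Γ, hγ'lt⟩ := exists_lt_of_csInf_lt hΓne (hw ▸ hγ)
      obtain ⟨z, hz, hzle⟩ := hγ'Γ
      exact ⟨z, hz, fun x hx => (hzle x hx).trans hγ'lt.le⟩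
    have hKdir : Directed (· ⊇ ·) K := by
      rintro ⟨γ1, h1⟩ ⟨γ2, h2⟩
      refine ⟨⟨min γ1 γ2, lt_min h1 h2⟩, ?_, ?_⟩
      · exact fun z hz => ⟨hz.1, fun x hx => (hz.2 x hx).trans (min_le_left _ _)⟩
      · exact fun z hz => ⟨hz.1, fun x hx => (hz.2 x hx).trans (min_le_right _ _)⟩
    have : Nonempty {γ : ℝ // w < γ} := ⟨⟨w + 1, by linarith⟩⟩
    obtain ⟨z, hzK⟩ := IsCompact.nonempty_iInter_of_directed_nonempty_isCompact_isClosed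
      K hKdir hKne hKc hKcl
    simp only [mem_iInter] at hzK
    have hzX2 : z ∈ X2 := (hzK ⟨w + 1, by linarith⟩).1
    refine ⟨z, hzX2, fun x hx => ?_⟩
    by_contra hgt
    push_neg at hgt
    set γ : ℝ := (w + x ⬝ᵥ A.mulVec z) / 2 with hγdef
    have h1 : w < γ := by simp [hγdef]; linarith
    have h2 := (hzK ⟨γ, h1⟩).2 x hx
    simp only [hγdef] at h2
    linarith
  obtain ⟨x2s, hx2sX2, hx2sle⟩ := hx2s
  -- existence of x1s with ∀ z ∈ X2, w ≤ f x1s z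
  have hSne : ∀ c : ℝ, c < w → ∃ x ∈ X1, ∀ z ∈ X2, c < x ⬝ᵥ A.mulVec z := by
    intro c hc
    set mid : ℝ := (c + w) / 2 with hmiddef
    have hcmid : c < mid := by simp [hmiddef]; linarith
    have hmidw : mid < w := by simp [hmiddef]; linarith
    have hmidnot : mid ∉ Γ := fun h => absurd (csInf_le hΓbdd h) (not_le.2 (hw ▸ hmidw))
    have hforall : ∀ z ∈ X2, ∃ x ∈ X1, mid < x ⬝ᵥ A.mulVec z := by
      intro z hz
      by_contra hno
      push_neg at hno
      exact hmidnot ⟨z, hz, hno⟩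
    -- finite subcover
    set U : X1 → Set (Fin d → ℝ) := fun x => {z | mid < (x : Fin d → ℝ) ⬝ᵥ A.mulVec z} with hU
    have hUopen : ∀ x : X1, IsOpen (U x) := fun x =>
      isOpen_lt continuous_const (mmx_cont_right A x)
    have hcov : X2 ⊆ ⋃ x : X1, U x := by
      intro z hz
      obtain ⟨x, hxX1, hxlt⟩ := hforall z hz
      exact mem_iUnion.2 ⟨⟨x, hxX1⟩, hxlt⟩
    obtain ⟨t, ht⟩ := hX2c.elim_finite_subcover U hUopen hcov
    set L : List (Fin d → ℝ) := t.toList.map Subtype.val with hL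
    have hLX1 : ∀ p ∈ L, p ∈ X1 := by
      intro p hp
      simp only [hL, List.mem_map] at hp
      obtain ⟨⟨q, hq⟩, -, rfl⟩ := hp
      exact hq
    have hLspec : ∀ z ∈ X2, ∃ p ∈ L, mid < p ⬝ᵥ A.mulVec z := by
      intro z hz
      obtain ⟨x, hxmem⟩ := mem_iUnion.1 (ht hz)
      simp only [mem_iUnion, exists_prop] at hxmem
      obtain ⟨hxt, hxU⟩ := hxmem
      exact ⟨x.1, List.mem_map.2 ⟨x, Finset.mem_toList.2 hxt, rfl⟩, hxU⟩
    exact mmx_finite A X1 hX1conv L X2 hX2c hX2conv ⟨z0, hz0⟩ hLX1 c mid hcmid hLspec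
  have hx1s : ∃ x1s ∈ X1, ∀ z ∈ X2, w ≤ x1s ⬝ᵥ A.mulVec z := by
    set S : {c : ℝ // c < w} → Set (Fin d → ℝ) :=
      fun c => {x ∈ X1 | ∀ z ∈ X2, c.1 ≤ x ⬝ᵥ A.mulVec z} with hS
    have hScl : ∀ c, IsClosed (S c) := by
      intro c
      have : S c = X1 ∩ ⋂ z ∈ X2, {x | c.1 ≤ x ⬝ᵥ A.mulVec z} := by
        ext x; simp [hS, mem_iInter₂]
      rw [this]
      exact hX1c.isClosed.inter (isClosed_biInter fun z _ =>
        isClosed_Ici.preimage (mmx_cont_left A z))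
    have hSc : ∀ c, IsCompact (S c) := fun c =>
      hX1c.of_isClosed_subset (hScl c) (fun x hx => hx.1)
    have hSnonempty : ∀ c, (S c).Nonempty := by
      rintro ⟨c, hc⟩
      obtain ⟨x, hxX1, hxgt⟩ := hSne c hc
      exact ⟨x, hxX1, fun z hz => (hxgt z hz).le⟩
    have hSdir : Directed (· ⊇ ·) S := by
      rintro ⟨c1, h1⟩ ⟨c2, h2⟩
      refine ⟨⟨max c1 c2, max_lt h1 h2⟩, ?_, ?_⟩
      · exact fun x hx => ⟨hx.1, fun z hz => (le_max_left _ _).trans (hx.2 z hz)⟩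
      · exact fun x hx => ⟨hx.1, fun z hz => (le_max_right _ _).trans (hx.2 z hz)⟩
    have : Nonempty {c : ℝ // c < w} := ⟨⟨w - 1, by linarith⟩⟩
    obtain ⟨x, hxS⟩ := IsCompact.nonempty_iInter_of_directed_nonempty_isCompact_isClosed
      S hSdir hSnonempty hSc hScl
    simp only [mem_iInter] at hxS
    have hxX1 : x ∈ X1 := (hxS ⟨w - 1, by linarith⟩).1
    refine ⟨x, hxX1, fun z hz => ?_⟩
    by_contra hlt
    push_neg at hlt
    set c : ℝ := (x ⬝ᵥ A.mulVec z + w) / 2 with hcdef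
    have h1 : c < w := by simp [hcdef]; linarith
    have h2 := (hxS ⟨c, h1⟩).2 z hz
    simp only [hcdef] at h2
    linarith
  obtain ⟨x1s, hx1sX1, hx1sge⟩ := hx1s
  exact ⟨x1s, hx1sX1, x2s, hx2sX2, fun x hx z hz => (hx2sle x hx).trans (hx1sge z hz)⟩


theorem two_player_constant_sum_smooth
    (d : ℕ) (X1 X2 : Set (Fin d → ℝ)) (A B : Matrix (Fin d) (Fin d) ℝ) (V : ℝ)
    (hX1 : X1.Nonempty) (hX2 : X2.Nonempty)
    (hX1c : IsCompact X1) (hX2c : IsCompact X2)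
    (hX1conv : Convex ℝ X1) (hX2conv : Convex ℝ X2)
    (hconst : ∀ x1 ∈ X1, ∀ x2 ∈ X2, x1 ⬝ᵥ A.mulVec x2 + x1 ⬝ᵥ B.mulVec x2 = V)
    (hV : 0 < V) (μ : ℝ) (hμ : -1 < μ) :
    ∃ x1s ∈ X1, ∃ x2s ∈ X2,
      (∀ y1 ∈ X1, ∀ y2 ∈ X2,
        y1 ⬝ᵥ A.mulVec y2 + y1 ⬝ᵥ B.mulVec y2 ≤
          x1s ⬝ᵥ A.mulVec x2s + x1s ⬝ᵥ B.mulVec x2s) ∧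
      ∀ x1 ∈ X1, ∀ x2 ∈ X2,
        x1s ⬝ᵥ A.mulVec x2 + x1 ⬝ᵥ B.mulVec x2s ≥
          (1 + μ) * V - μ * (x1 ⬝ᵥ A.mulVec x2 + x1 ⬝ᵥ B.mulVec x2) := by
  obtain ⟨x1s, hx1s, x2s, hx2s, hsaddle⟩ :=
    mmx_saddle A X1 X2 hX1 hX2 hX1c hX2c hX1conv hX2conv
  refine ⟨x1s, hx1s, x2s, hx2s, ?_, ?_⟩
  · intro y1 hy1 y2 hy2
    rw [hconst y1 hy1 y2 hy2, hconst x1s hx1s x2s hx2s]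
  · intro x1 h1 x2 h2
    have hB : x1 ⬝ᵥ A.mulVec x2s + x1 ⬝ᵥ B.mulVec x2s = V := hconst x1 h1 x2s hx2s
    have hSW : x1 ⬝ᵥ A.mulVec x2 + x1 ⬝ᵥ B.mulVec x2 = V := hconst x1 h1 x2 h2
    have hs := hsaddle x1 h1 x2 h2
    have hr : (1 + μ) * V - μ * V = V := by ring
    rw [ge_iff_le, hSW, hr]
    linarith
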